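/- arXiv:2504.00624 — 3 statements merged into one kernel-verified Lean document; each statement's English description precedes it below -/
import Mathlib

section
/- Let μ be a monotone measure on a finite nonempty set X and f : X → ℝ. Then the Choquet integral can be written in terms of the Möbius transform of μ as ∫ f dμ = ∑_{∅ ≠ B ⊆ X} M_μ(B) · min_{x ∈ B} f(x). -/
open Finset

/-- The set `{x*_k, …, x*_{n-1}}` (0-indexed): the image under the enumeration `e`
of the indices `≥ k`. -/
def upSet {X : Type*} [DecidableEq X] {n : ℕ} (e : Fin n ≃ X) (k : ℕ) : Finset X :=
  (Finset.univ.filter fun j : Fin n => k ≤ (j : ℕ)).image e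

/-- The Choquet integral of `f` with respect to the set function `μ`, computed via an
enumeration `e : Fin n ≃ X` (assumed to sort `f` nondecreasingly):
`∑ i, f(x*_i) · [μ(A*_i) − μ(A*_{i+1})]` where `A*_i = {x*_i, …, x*_{n-1}}`
(note `A*_n = ∅`, and `μ ∅ = 0` for a monotone measure). -/
def choquetSum {X : Type*} [DecidableEq X] {n : ℕ} (μ : Finset X → ℝ) (f : X → ℝ)
    (e : Fin n ≃ X) : ℝ :=
  ∑ i : Fin n, f (e i) * (μ (upSet e i) - μ (upSet e ((i : ℕ) + 1)))

/-- The Möbius transform `M_μ(B) := ∑_{A ⊆ B} (−1)^{|B|−|A|} μ(A)`. -/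
def mobius {X : Type*} (μ : Finset X → ℝ) (B : Finset X) : ℝ :=
  ∑ A ∈ B.powerset, (-1 : ℝ) ^ (B.card - A.card) * μ A

lemma mobius_inv {X : Type*} [DecidableEq X] (A : Finset X) :
    ∀ μ : Finset X → ℝ, ∑ B ∈ A.powerset, mobius μ B = μ A := by
  induction A using Finset.induction_on with
  | empty => intro μ; simp [mobius]
  | @insert a s ha ih =>
    intro μ
    rw [Finset.sum_powerset_insert ha]
    have key : ∀ B ∈ s.powerset, mobius μ (insert a B)
        = mobius (fun C => μ (insert a C)) B - mobius μ B := by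
      intro B hB
      rw [mem_powerset] at hB
      have haB : a ∉ B := fun h => ha (hB h)
      unfold mobius
      beta_reduce
      rw [Finset.sum_powerset_insert haB, card_insert_of_notMem haB]
      have e1 : ∀ C ∈ B.powerset, (-1:ℝ)^(B.card+1-C.card) * μ C
          = -((-1:ℝ)^(B.card-C.card) * μ C) := by
        intro C hC
        rw [mem_powerset] at hC
        have hcard : C.card ≤ B.card := card_le_card hC
        have h1 : B.card + 1 - C.card = (B.card - C.card) + 1 := by omega
        rw [h1, pow_succ]; ring
      have e2 : ∀ C ∈ B.powerset, (-1:ℝ)^(B.card+1-(insert a C).card) * μ (insert a C)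
          = (-1:ℝ)^(B.card-C.card) * μ (insert a C) := by
        intro C hC
        rw [mem_powerset] at hC
        have haC : a ∉ C := fun h => haB (hC h)
        have hcard : C.card ≤ B.card := card_le_card hC
        rw [card_insert_of_notMem haC]
        have h2 : B.card + 1 - (C.card + 1) = B.card - C.card := by omega
        rw [h2]
      rw [Finset.sum_congr rfl e1, Finset.sum_congr rfl e2, Finset.sum_neg_distrib]
      ring
    rw [Finset.sum_congr rfl key, Finset.sum_sub_distrib, ih, ih]
    ring

lemma mem_upSet {X : Type*} [DecidableEq X] {n : ℕ} (e : Fin n ≃ X) (k : ℕ) (x : X) :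
    x ∈ upSet e k ↔ k ≤ ((e.symm x : Fin n) : ℕ) := by
  simp only [upSet, mem_image, mem_filter, mem_univ, true_and]
  constructor
  · rintro ⟨j, hj, rfl⟩; simpa using hj
  · intro h; exact ⟨e.symm x, h, e.apply_symm_apply x⟩

lemma upSet_of_ge {X : Type*} [DecidableEq X] {n : ℕ} (e : Fin n ≃ X) {k : ℕ} (hk : n ≤ k) :
    upSet e k = ∅ := by
  ext x
  simp only [mem_upSet, notMem_empty, iff_false, not_le]
  exact lt_of_lt_of_le (e.symm x).isLt hk

lemma upSet_succ {X : Type*} [DecidableEq X] {n : ℕ} (e : Fin n ≃ X) {k : ℕ} (hk : k < n) :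
    upSet e k = insert (e ⟨k, hk⟩) (upSet e (k + 1)) := by
  ext x
  simp only [mem_upSet, mem_insert]
  constructor
  · intro h
    rcases eq_or_lt_of_le h with h' | h'
    · left
      have : e.symm x = ⟨k, hk⟩ := Fin.ext h'.symm
      rw [← this, e.apply_symm_apply]
    · right; omega
  · rintro (rfl | h)
    · simp
    · omega

lemma notMem_upSet_succ {X : Type*} [DecidableEq X] {n : ℕ} (e : Fin n ≃ X) {k : ℕ}
    (hk : k < n) : e ⟨k, hk⟩ ∉ upSet e (k + 1) := by
  simp [mem_upSet]

lemma aux_base {X : Type*} [DecidableEq X] {n : ℕ} (μ : Finset X → ℝ) (f : X → ℝ)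
    (e : Fin n ≃ X) {k : ℕ} (hk : n ≤ k) :
    ∑ B ∈ (upSet e k).powerset,
        (if hB : B.Nonempty then mobius μ B * B.inf' hB f else 0)
      = ∑ i ∈ univ.filter (fun i : Fin n => k ≤ (i : ℕ)),
          f (e i) * (μ (upSet e i) - μ (upSet e ((i : ℕ) + 1))) := by
  rw [upSet_of_ge e hk]
  rw [Finset.filter_false_of_mem (fun i _ => by have := i.isLt; omega)]
  simp

lemma aux_main {X : Type*} [DecidableEq X] {n : ℕ} (μ : Finset X → ℝ) (f : X → ℝ)
    (e : Fin n ≃ X) (hsort : Monotone (f ∘ e)) :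
    ∀ m k, n ≤ k + m →
    ∑ B ∈ (upSet e k).powerset,
        (if hB : B.Nonempty then mobius μ B * B.inf' hB f else 0)
      = ∑ i ∈ univ.filter (fun i : Fin n => k ≤ (i : ℕ)),
          f (e i) * (μ (upSet e i) - μ (upSet e ((i : ℕ) + 1))) := by
  intro m
  induction m with
  | zero => intro k hk; exact aux_base μ f e (by omega)
  | succ m ih =>
    intro k hk
    by_cases hkn : n ≤ k
    · exact aux_base μ f e hkn
    push_neg at hkn
    set a := e ⟨k, hkn⟩ with ha
    have hnot : a ∉ upSet e (k + 1) := notMem_upSet_succ e hkn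
    have hup : upSet e k = insert a (upSet e (k + 1)) := upSet_succ e hkn
    have hfilter : (univ.filter fun i : Fin n => k ≤ (i : ℕ))
        = insert ⟨k, hkn⟩ (univ.filter fun i : Fin n => k + 1 ≤ (i : ℕ)) := by
      ext i
      simp only [mem_filter, mem_univ, true_and, mem_insert, Fin.ext_iff]
      omega
    rw [hup, Finset.sum_powerset_insert hnot, hfilter,
      Finset.sum_insert (by simp), ih (k + 1) (by omega)]
    rw [add_comm]
    congr 1
    -- remaining: the inserted-`a` part equals f a * (μ (upSet e k) - μ (upSet e (k+1)))
    have hmin : ∀ B ∈ (upSet e (k + 1)).powerset,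
        (if hB : (insert a B).Nonempty then mobius μ (insert a B) * (insert a B).inf' hB f
          else 0) = f a * mobius μ (insert a B) := by
      intro B hB
      rw [mem_powerset] at hB
      rw [dif_pos (insert_nonempty a B)]
      have hsub : insert a B ⊆ upSet e k := by
        rw [hup]; exact insert_subset_insert a hB
      have hinf : (insert a B).inf' (insert_nonempty a B) f = f a := by
        apply le_antisymm
        · exact inf'_le f (mem_insert_self a B)
        · apply le_inf'
          intro x hx
          have hx' : x ∈ upSet e k := hsub hx
          rw [mem_upSet] at hx'
          have : (⟨k, hkn⟩ : Fin n) ≤ e.symm x := hx'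
          have := hsort this
          simpa [ha] using this
      rw [hinf]; ring
    rw [Finset.sum_congr rfl hmin, ← Finset.mul_sum]
    have hsum : ∑ B ∈ (upSet e (k + 1)).powerset, mobius μ (insert a B)
        = μ (upSet e k) - μ (upSet e (k + 1)) := by
      have h1 : ∑ B ∈ (upSet e k).powerset, mobius μ B = μ (upSet e k) := mobius_inv _ μ
      rw [hup, Finset.sum_powerset_insert hnot, mobius_inv _ μ] at h1
      rw [← hup] at h1
      linarith
    rw [hsum]

/-- `∫ f dμ = ∑_{∅ ≠ B ⊆ X} M_μ(B) · min_{x ∈ B} f(x)`, where `M_μ` is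
the Möbius transform of `μ`. -/
theorem choquet_integral_eq_mobius_min
    {X : Type*} [Fintype X] [DecidableEq X] {n : ℕ} (hn : 0 < n)
    (μ : Finset X → ℝ) (hμ_empty : μ ∅ = 0)
    (hμ_mono : ∀ A B : Finset X, A ⊆ B → μ A ≤ μ B)
    (f : X → ℝ) (e : Fin n ≃ X) (hsort : Monotone (f ∘ e)) :
    choquetSum μ f e =
      ∑ B ∈ (Finset.univ : Finset X).powerset,
        if hB : B.Nonempty then mobius μ B * B.inf' hB f else 0 := by
  have huniv : upSet e 0 = (Finset.univ : Finset X) := by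
    ext x; simp [mem_upSet]
  have h := aux_main μ f e hsort n 0 (by omega)
  rw [huniv] at h
  rw [h, choquetSum]
  rw [Finset.filter_true_of_mem (fun i _ => Nat.zero_le _)]
end

section
/- Let 𝒜 be a finite nonempty set of attributes, each a function a : X → [0,1] on a set X of instances, and let μ be a normalized monotone measure on 𝒜 (μ(𝒜) = 1). With μ^s := (μ + μ̄)/2 the symmetrized measure, for all x, y ∈ X it holds that R^{μ^s}(x, y) = μ(𝒜) − d^{μ^s}(x, y). -/
open Finset

/-- The dual measure `μ̄(A) := μ(X) − μ(X \ A)`. -/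
def dualMeasure {X : Type*} [Fintype X] [DecidableEq X] (μ : Finset X → ℝ) :
    Finset X → ℝ :=
  fun A => μ Finset.univ - μ (Finset.univ \ A)

lemma upSet_zero {X : Type*} [Fintype X] [DecidableEq X] {n : ℕ} (e : Fin n ≃ X) :
    upSet e 0 = univ := by ext x; simp [mem_upSet]

lemma upSet_top {X : Type*} [DecidableEq X] {n : ℕ} (e : Fin n ≃ X) :
    upSet e n = ∅ := by
  ext x
  simp only [mem_upSet, Finset.notMem_empty, iff_false]
  exact Nat.not_le.mpr (e.symm x).isLt

/-- Duality: the Choquet sum of `c - f` w.r.t. a self-dual set function `ν`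
equals `c · ν(univ)` minus the Choquet sum of `f` taken along the reversed
enumeration. -/
lemma choquetSum_const_sub {X : Type*} [Fintype X] [DecidableEq X] {n : ℕ}
    (ν : Finset X → ℝ) (hν0 : ν ∅ = 0)
    (hdual : ∀ S : Finset X, ν (univ \ S) = ν univ - ν S)
    (f : X → ℝ) (c : ℝ) (e : Fin n ≃ X) :
    choquetSum ν (fun a => c - f a) e
      = c * ν univ - choquetSum ν f (Fin.revPerm.trans e) := by
  set e' : Fin n ≃ X := Fin.revPerm.trans e with he'
  have hsymm : ∀ z : X, ((e'.symm z : Fin n) : ℕ) = n - 1 - ((e.symm z : Fin n) : ℕ) := by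
    intro z
    have : e'.symm z = (e.symm z).rev := rfl
    rw [this, Fin.val_rev]
    omega
  have h1 : ∀ j : Fin n, upSet e ((j.rev : ℕ)) = univ \ upSet e' ((j : ℕ) + 1) := by
    intro j
    ext z
    have hz := (e.symm z).isLt
    have hj := j.isLt
    simp only [mem_upSet, Finset.mem_sdiff, Finset.mem_univ, true_and, hsymm, Fin.val_rev]
    omega
  have h2 : ∀ j : Fin n, upSet e ((j.rev : ℕ) + 1) = univ \ upSet e' ((j : ℕ)) := by
    intro j
    ext z
    have hz := (e.symm z).isLt
    have hj := j.isLt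
    simp only [mem_upSet, Finset.mem_sdiff, Finset.mem_univ, true_and, hsymm, Fin.val_rev]
    omega
  have expand : choquetSum ν (fun a => c - f a) e
      = (∑ i : Fin n, c * (ν (upSet e i) - ν (upSet e ((i : ℕ) + 1))))
        - ∑ i : Fin n, f (e i) * (ν (upSet e i) - ν (upSet e ((i : ℕ) + 1))) := by
    rw [choquetSum, ← Finset.sum_sub_distrib]
    exact Finset.sum_congr rfl (fun i _ => by ring)
  rw [expand]
  have tele : (∑ i : Fin n, c * (ν (upSet e i) - ν (upSet e ((i : ℕ) + 1)))) = c * ν univ := by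
    rw [← Finset.mul_sum]
    rw [Fin.sum_univ_eq_sum_range (fun k => ν (upSet e k) - ν (upSet e (k + 1))) n,
      Finset.sum_range_sub' (fun k => ν (upSet e k)) n, upSet_zero, upSet_top, hν0]
    ring
  rw [tele]
  congr 1
  have reindex : (∑ i : Fin n, f (e i) * (ν (upSet e i) - ν (upSet e ((i : ℕ) + 1))))
      = ∑ j : Fin n, f (e j.rev) * (ν (upSet e (j.rev : ℕ)) - ν (upSet e ((j.rev : ℕ) + 1))) := by
    exact (Equiv.sum_comp (Fin.revPerm)
      (fun i : Fin n => f (e i) * (ν (upSet e (i : ℕ)) - ν (upSet e ((i : ℕ) + 1))))).symm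
  rw [reindex, choquetSum]
  apply Finset.sum_congr rfl
  intro j _
  have hj1 : ν (upSet e (j.rev : ℕ)) = ν univ - ν (upSet e' ((j : ℕ) + 1)) := by
    rw [h1 j, hdual]
  have hj2 : ν (upSet e ((j.rev : ℕ) + 1)) = ν univ - ν (upSet e' ((j : ℕ))) := by
    rw [h2 j, hdual]
  have : e' j = e j.rev := rfl
  rw [hj1, hj2, this]
  ring

/-- Abel summation form of the Choquet sum. -/
lemma choquetSum_abel {X : Type*} [DecidableEq X] {n : ℕ} (hn : 0 < n)
    (μ : Finset X → ℝ) (f : X → ℝ) (e : Fin n ≃ X)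
    (F : ℕ → ℝ) (hF : ∀ i : Fin n, F (i : ℕ) = f (e i)) :
    choquetSum μ f e
      = F 0 * μ (upSet e 0) - F (n - 1) * μ (upSet e n)
        + ∑ j ∈ Finset.Ico 1 n, (F j - F (j - 1)) * μ (upSet e j) := by
  have step1 : choquetSum μ f e
      = ∑ i ∈ Finset.range n, (F i * μ (upSet e i) - F i * μ (upSet e (i + 1))) := by
    rw [choquetSum, ← Fin.sum_univ_eq_sum_range
      (fun k => F k * μ (upSet e k) - F k * μ (upSet e (k + 1))) n]
    exact Finset.sum_congr rfl (fun i _ => by rw [hF i]; ring)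
  rw [step1, Finset.sum_sub_distrib]
  have hA : ∑ i ∈ Finset.range n, F i * μ (upSet e i)
      = F 0 * μ (upSet e 0) + ∑ j ∈ Finset.Ico 1 n, F j * μ (upSet e j) := by
    rw [Finset.range_eq_Ico, Finset.sum_eq_sum_Ico_succ_bot hn]
  have hB : ∑ i ∈ Finset.range n, F i * μ (upSet e (i + 1))
      = (∑ j ∈ Finset.Ico 1 n, F (j - 1) * μ (upSet e j)) + F (n - 1) * μ (upSet e n) := by
    have h1 : ∑ i ∈ Finset.range n, F i * μ (upSet e (i + 1))
        = ∑ j ∈ Finset.Ico 1 (n + 1), F (j - 1) * μ (upSet e j) := by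
      rw [Finset.sum_Ico_eq_sum_range]
      simp only [Nat.add_sub_cancel]
      exact Finset.sum_congr rfl (fun i _ => by rw [Nat.add_comm 1 i]; simp)
    rw [h1, Finset.sum_Ico_succ_top hn]
  rw [hA, hB]
  have : ∑ j ∈ Finset.Ico 1 n, (F j - F (j - 1)) * μ (upSet e j)
      = ∑ j ∈ Finset.Ico 1 n, F j * μ (upSet e j)
        - ∑ j ∈ Finset.Ico 1 n, F (j - 1) * μ (upSet e j) := by
    rw [← Finset.sum_sub_distrib]
    exact Finset.sum_congr rfl (fun j _ => by ring)
  rw [this]; ring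

/-- The Choquet sum is independent of the choice of sorting enumeration. -/
lemma choquetSum_indep {X : Type*} [Fintype X] [DecidableEq X] {n : ℕ}
    (μ : Finset X → ℝ) (f : X → ℝ) (e e' : Fin n ≃ X)
    (h : Monotone fun i => f (e i)) (h' : Monotone fun i => f (e' i)) :
    choquetSum μ f e = choquetSum μ f e' := by
  classical
  rcases Nat.eq_zero_or_pos n with rfl | hn
  · simp [choquetSum]
  -- the sorted value sequences coincide
  have hfe : (fun i : Fin n => f (e i)) = fun i : Fin n => f (e' i) := by
    have key : (f ∘ e) ∘ (Equiv.refl (Fin n) : Equiv.Perm (Fin n))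
        = (f ∘ e) ∘ (e'.trans e.symm : Equiv.Perm (Fin n)) := by
      apply Tuple.unique_monotone
      · exact h
      · have : ((f ∘ e) ∘ (e'.trans e.symm : Equiv.Perm (Fin n))) = fun i => f (e' i) := by
          funext i; simp [Function.comp]
        rw [this]; exact h'
    funext i
    have := congrFun key i
    simpa [Function.comp] using this
  set F : ℕ → ℝ := fun k => if hk : k < n then f (e ⟨k, hk⟩) else 0 with hFdef
  have hF : ∀ i : Fin n, F (i : ℕ) = f (e i) := by
    intro i; simp [hFdef, i.isLt]
  have hF' : ∀ i : Fin n, F (i : ℕ) = f (e' i) := by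
    intro i; rw [hF i]; exact congrFun hfe i
  have hFmono : ∀ k l : ℕ, k ≤ l → l < n → F k ≤ F l := by
    intro k l hkl hl
    have hk : k < n := lt_of_le_of_lt (by omega) hl
    simp only [hFdef, dif_pos hk, dif_pos hl]
    exact h (by exact hkl)
  -- key: when f jumps at j, upSet is the level set, independent of the enumeration
  have key : ∀ (E : Fin n ≃ X), (Monotone fun i => f (E i)) → (∀ i : Fin n, F (i : ℕ) = f (E i)) →
      ∀ j : ℕ, 1 ≤ j → j < n → F j ≠ F (j - 1) →
      upSet E j = Finset.univ.filter (fun a => F j ≤ f a) := by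
    intro E hE hFE j hj1 hjn hne
    have hj1n : j - 1 < n := by omega
    ext z
    simp only [mem_upSet, Finset.mem_filter, Finset.mem_univ, true_and]
    have hz : f (E (E.symm z)) = f z := by rw [E.apply_symm_apply]
    constructor
    · intro hjz
      have : f (E ⟨j, hjn⟩) ≤ f (E (E.symm z)) := hE (by simpa [Fin.le_def] using hjz)
      calc F j = f (E ⟨j, hjn⟩) := hFE ⟨j, hjn⟩
        _ ≤ f z := by rw [← hz]; exact this
    · intro hfz
      by_contra hlt
      push_neg at hlt
      have hle : (E.symm z : ℕ) ≤ j - 1 := by omega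
      have h1 : f (E (E.symm z)) ≤ f (E ⟨j - 1, hj1n⟩) := hE (by simpa [Fin.le_def] using hle)
      have h2 : F (j - 1) < F j := by
        rcases lt_or_eq_of_le (hFmono (j-1) j (by omega) hjn) with hlt' | heq
        · exact hlt'
        · exact absurd heq.symm hne
      rw [hFE ⟨j - 1, hj1n⟩] at h2
      rw [hz] at h1
      linarith
  rw [choquetSum_abel hn μ f e F hF, choquetSum_abel hn μ f e' F hF',
    upSet_zero, upSet_zero, upSet_top, upSet_top]
  congr 1
  apply Finset.sum_congr rfl
  intro j hj
  rw [Finset.mem_Ico] at hj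
  rcases eq_or_ne (F j) (F (j - 1)) with heq | hne
  · rw [heq]; ring
  · rw [key e h hF j hj.1 hj.2 hne, key e' h' hF' j hj.1 hj.2 hne]

/-- For a normalized monotone measure `μ` on a finite nonempty set of
attributes `a : X → [0,1]`, with symmetrized measure `μ^s := (μ + μ̄)/2`, the Choquet
similarity and distance satisfy `R^{μ^s}(x,y) = μ(𝒜) − d^{μ^s}(x,y)`. -/
theorem choquet_similarity_symmetrized_eq_measure_sub_distance
    {I A : Type*} [Fintype A] [DecidableEq A] {n : ℕ} (hn : 0 < n)
    (val : A → I → ℝ) (hval : ∀ a x, val a x ∈ Set.Icc (0 : ℝ) 1)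
    (μ : Finset A → ℝ) (hμ_empty : μ ∅ = 0)
    (hμ_mono : ∀ S T : Finset A, S ⊆ T → μ S ≤ μ T)
    (hμ_norm : μ Finset.univ = 1)
    (x y : I)
    (e₁ : Fin n ≃ A) (hsort₁ : Monotone (fun i => 1 - |val (e₁ i) x - val (e₁ i) y|))
    (e₂ : Fin n ≃ A) (hsort₂ : Monotone (fun i => |val (e₂ i) x - val (e₂ i) y|)) :
    choquetSum (fun S => (μ S + dualMeasure μ S) / 2)
        (fun a => 1 - |val a x - val a y|) e₁ =
      μ Finset.univ -
        choquetSum (fun S => (μ S + dualMeasure μ S) / 2)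
          (fun a => |val a x - val a y|) e₂ := by
  classical
  set f : A → ℝ := fun a => |val a x - val a y| with hf
  set ν : Finset A → ℝ := fun S => (μ S + dualMeasure μ S) / 2 with hν
  have hν0 : ν ∅ = 0 := by
    simp [hν, dualMeasure, hμ_empty]
  have hνuniv : ν univ = 1 := by
    simp [hν, dualMeasure, hμ_empty, hμ_norm]
  have hdual : ∀ S : Finset A, ν (univ \ S) = ν univ - ν S := by
    intro S
    have hS : univ \ (univ \ S) = S := by
      rw [Finset.sdiff_sdiff_self_left, Finset.univ_inter]
    simp only [hν, dualMeasure, hS, Finset.sdiff_self, Finset.sdiff_empty, hμ_empty]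
    ring
  have key := choquetSum_const_sub ν hν0 hdual f 1 e₁
  have hmono1 : Monotone fun i => f ((Fin.revPerm.trans e₁) i) := by
    intro i j hij
    have hrev : j.rev ≤ i.rev := Fin.rev_le_rev.mpr hij
    have h := hsort₁ hrev
    simp only at h
    show f (e₁ (Fin.revPerm i)) ≤ f (e₁ (Fin.revPerm j))
    simp only [Fin.revPerm_apply, hf]
    linarith
  have hindep : choquetSum ν f (Fin.revPerm.trans e₁) = choquetSum ν f e₂ :=
    choquetSum_indep ν f _ e₂ hmono1 hsort₂
  calc choquetSum ν (fun a => 1 - f a) e₁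
      = 1 * ν univ - choquetSum ν f (Fin.revPerm.trans e₁) := key
    _ = μ univ - choquetSum ν f e₂ := by rw [hindep, hνuniv, hμ_norm]; ring
end

section
/- Let 𝒜 be a finite nonempty set of attributes on a set X of instances, μ a monotone measure on 𝒜, and α ∈ [0,1] such that μ_α := (1 − α)μ + α μ̄ is monotone. Then the α-Choquet distance admits the Möbius decomposition: for all x, y ∈ X, ∫ |a(x) − a(y)| dμ_α(a) = ∑_{∅ ≠ B ⊆ 𝒜} M_μ(B) · [(1 − α) · min_{a ∈ B} |a(x) − a(y)| + α · max_{a ∈ B} |a(x) − a(y)|]. -/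
open Finset

/-! ### Auxiliary lemmas -/

lemma mem_upSet_iff {X : Type*} [DecidableEq X] {n : ℕ} (e : Fin n ≃ X) (k : ℕ) (b : X) :
    b ∈ upSet e k ↔ k ≤ (e.symm b : ℕ) := by
  simp only [upSet, Finset.mem_image, Finset.mem_filter, Finset.mem_univ, true_and]
  constructor
  · rintro ⟨j, hj, rfl⟩; simpa using hj
  · intro h; exact ⟨e.symm b, h, by simp⟩

lemma subset_upSet_iff {X : Type*} [DecidableEq X] {n : ℕ} (e : Fin n ≃ X) (k : ℕ)
    (B : Finset X) : B ⊆ upSet e k ↔ ∀ b ∈ B, k ≤ (e.symm b : ℕ) := by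
  simp [Finset.subset_iff, mem_upSet_iff]

lemma subset_compl_upSet_iff {X : Type*} [Fintype X] [DecidableEq X] {n : ℕ} (e : Fin n ≃ X)
    (k : ℕ) (B : Finset X) :
    B ⊆ Finset.univ \ upSet e k ↔ ∀ b ∈ B, (e.symm b : ℕ) < k := by
  simp [Finset.subset_iff, mem_upSet_iff, Nat.not_le]

lemma sum_powerset_neg_one_pow_card_real {X : Type*} [DecidableEq X] (S : Finset X) :
    ∑ B ∈ S.powerset, (-1 : ℝ) ^ B.card = if S = ∅ then 1 else 0 := by
  have h := Finset.sum_powerset_neg_one_pow_card (x := S)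
  calc ∑ B ∈ S.powerset, (-1 : ℝ) ^ B.card
      = ((∑ B ∈ S.powerset, (-1 : ℤ) ^ B.card : ℤ) : ℝ) := by push_cast; rfl
    _ = _ := by rw [h]; split <;> norm_num

/-- Möbius inversion: `μ S = ∑_{B ⊆ S} M_μ(B)`. -/
lemma mobius_inversion {X : Type*} [DecidableEq X] (μ : Finset X → ℝ) (S : Finset X) :
    ∑ B ∈ S.powerset, mobius μ B = μ S := by
  unfold mobius
  rw [Finset.sum_comm' (t' := S.powerset)
      (s' := fun A => S.powerset.filter (fun B => A ⊆ B))
      (fun B A => by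
        simp only [Finset.mem_powerset, Finset.mem_filter]
        constructor
        · rintro ⟨h1, h2⟩; exact ⟨⟨h1, h2⟩, h2.trans h1⟩
        · rintro ⟨⟨h1, h2⟩, h3⟩; exact ⟨h1, h2⟩)]
  have key : ∀ A ∈ S.powerset,
      ∑ B ∈ S.powerset.filter (fun B => A ⊆ B), (-1 : ℝ) ^ (B.card - A.card) * μ A
        = (if A = S then 1 else 0) * μ A := by
    intro A hA
    rw [Finset.mem_powerset] at hA
    rw [← Finset.sum_mul]
    congr 1
    have := sum_powerset_neg_one_pow_card_real (S \ A)
    calc ∑ B ∈ S.powerset.filter (fun B => A ⊆ B), (-1 : ℝ) ^ (B.card - A.card)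
        = ∑ C ∈ (S \ A).powerset, (-1 : ℝ) ^ C.card := by
          apply Finset.sum_nbij' (fun B => B \ A) (fun C => A ∪ C)
          · intro B hB
            simp only [Finset.mem_filter, Finset.mem_powerset] at hB ⊢
            exact Finset.sdiff_subset_sdiff hB.1 le_rfl
          · intro C hC
            simp only [Finset.mem_powerset] at hC
            simp only [Finset.mem_filter, Finset.mem_powerset]
            exact ⟨Finset.union_subset hA (hC.trans Finset.sdiff_subset), Finset.subset_union_left⟩
          · intro B hB
            simp only [Finset.mem_filter, Finset.mem_powerset] at hB
            exact Finset.union_sdiff_of_subset hB.2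
          · intro C hC
            simp only [Finset.mem_powerset] at hC
            rw [Finset.union_sdiff_cancel_left]
            exact Finset.disjoint_left.mpr fun a ha haC =>
              (Finset.mem_sdiff.mp (hC haC)).2 ha
          · intro B hB
            simp only [Finset.mem_filter, Finset.mem_powerset] at hB
            rw [Finset.card_sdiff_of_subset hB.2]
      _ = if S \ A = ∅ then 1 else 0 := this
      _ = if A = S then 1 else 0 := by
          congr 1
          simp only [Finset.sdiff_eq_empty_iff_subset, eq_iff_iff]
          exact ⟨fun h => Finset.Subset.antisymm hA h, fun h => h ▸ le_rfl⟩
  rw [Finset.sum_congr rfl key]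
  simp only [ite_mul, one_mul, zero_mul]
  rw [Finset.sum_ite_eq' S.powerset S μ]
  simp

lemma measure_expand {X : Type*} [Fintype X] [DecidableEq X] (μ : Finset X → ℝ)
    (S : Finset X) :
    μ S = ∑ B ∈ (Finset.univ : Finset X).powerset, (if B ⊆ S then mobius μ B else 0) := by
  rw [← Finset.sum_filter]
  have : (Finset.univ : Finset X).powerset.filter (fun B => B ⊆ S) = S.powerset := by
    ext B; simp [Finset.mem_powerset]
  rw [this, mobius_inversion]

/-- Key telescoping lemma picking out the minimum. -/
lemma key_min {X : Type*} [DecidableEq X] {n : ℕ} (e : Fin n ≃ X) (g : X → ℝ)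
    (hg : Monotone fun i => g (e i)) (c : ℝ) (B : Finset X) (hB : B.Nonempty) :
    ∑ i : Fin n, g (e i) *
        ((if B ⊆ upSet e (i : ℕ) then c else 0) -
          (if B ⊆ upSet e ((i : ℕ) + 1) then c else 0))
      = c * B.inf' hB g := by
  obtain ⟨b0, hb0, hb0eq⟩ := Finset.exists_mem_eq_inf' hB (fun b => ((e.symm b : Fin n) : ℕ))
  set m : ℕ := B.inf' hB (fun b => ((e.symm b : Fin n) : ℕ)) with hm
  have hmlt : m < n := hb0eq ▸ (e.symm b0).isLt
  set mm : Fin n := ⟨m, hmlt⟩ with hmm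
  have hmmval : (mm : ℕ) = m := rfl
  have hsub : ∀ k : ℕ, B ⊆ upSet e k ↔ k ≤ m := by
    intro k
    rw [subset_upSet_iff]
    constructor
    · intro h; exact hb0eq ▸ h b0 hb0
    · intro h b hb
      have hle : m ≤ ((e.symm b : Fin n) : ℕ) :=
        Finset.inf'_le (fun b => ((e.symm b : Fin n) : ℕ)) hb
      omega
  rw [Finset.sum_eq_single mm]
  · have h1 : B ⊆ upSet e (mm : ℕ) := (hsub m).mpr le_rfl
    have h2 : ¬ B ⊆ upSet e ((mm : ℕ) + 1) := by rw [hsub, hmmval]; omega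
    rw [if_pos h1, if_neg h2]
    have hem : e mm = b0 := by
      have h3 : e.symm b0 = mm := Fin.ext (by rw [← hb0eq])
      rw [← h3, Equiv.apply_symm_apply]
    have hval : g (e mm) = B.inf' hB g := by
      apply le_antisymm
      · apply Finset.le_inf'
        intro b hb
        have h4 : mm ≤ e.symm b := by
          have hle : m ≤ ((e.symm b : Fin n) : ℕ) :=
            Finset.inf'_le (fun b => ((e.symm b : Fin n) : ℕ)) hb
          rw [Fin.le_def, hmmval]; omega
        calc g (e mm) ≤ g (e (e.symm b)) := hg h4
          _ = g b := by rw [Equiv.apply_symm_apply]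
      · exact hem ▸ Finset.inf'_le g hb0
    rw [hval]; ring
  · intro i _ hne
    have hnem : (i : ℕ) ≠ m := fun h => hne (Fin.ext h)
    rcases lt_or_gt_of_ne hnem with h | h
    · rw [if_pos ((hsub _).mpr (by omega)), if_pos ((hsub _).mpr (by omega))]; ring
    · rw [if_neg (by rw [hsub]; omega), if_neg (by rw [hsub]; omega)]; ring
  · intro h; exact absurd (Finset.mem_univ mm) h

/-- Key telescoping lemma picking out the maximum. -/
lemma key_max {X : Type*} [Fintype X] [DecidableEq X] {n : ℕ} (e : Fin n ≃ X) (g : X → ℝ)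
    (hg : Monotone fun i => g (e i)) (c : ℝ) (B : Finset X) (hB : B.Nonempty) :
    ∑ i : Fin n, g (e i) *
        ((if B ⊆ Finset.univ \ upSet e ((i : ℕ) + 1) then c else 0) -
          (if B ⊆ Finset.univ \ upSet e (i : ℕ) then c else 0))
      = c * B.sup' hB g := by
  obtain ⟨b0, hb0, hb0eq⟩ := Finset.exists_mem_eq_sup' hB (fun b => ((e.symm b : Fin n) : ℕ))
  set m : ℕ := B.sup' hB (fun b => ((e.symm b : Fin n) : ℕ)) with hm
  have hmlt : m < n := hb0eq ▸ (e.symm b0).isLt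
  set mm : Fin n := ⟨m, hmlt⟩ with hmm
  have hmmval : (mm : ℕ) = m := rfl
  have hsub : ∀ k : ℕ, B ⊆ Finset.univ \ upSet e k ↔ m < k := by
    intro k
    rw [subset_compl_upSet_iff]
    constructor
    · intro h; exact hb0eq ▸ h b0 hb0
    · intro h b hb
      have hle : ((e.symm b : Fin n) : ℕ) ≤ m :=
        Finset.le_sup' (fun b => ((e.symm b : Fin n) : ℕ)) hb
      omega
  rw [Finset.sum_eq_single mm]
  · have h1 : B ⊆ Finset.univ \ upSet e ((mm : ℕ) + 1) := (hsub _).mpr (by omega)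
    have h2 : ¬ B ⊆ Finset.univ \ upSet e (mm : ℕ) := by rw [hsub]; omega
    rw [if_pos h1, if_neg h2]
    have hem : e mm = b0 := by
      have h3 : e.symm b0 = mm := Fin.ext (by rw [← hb0eq])
      rw [← h3, Equiv.apply_symm_apply]
    have hval : g (e mm) = B.sup' hB g := by
      apply le_antisymm
      · exact hem ▸ Finset.le_sup' g hb0
      · apply Finset.sup'_le
        intro b hb
        have h4 : e.symm b ≤ mm := by
          have hle : ((e.symm b : Fin n) : ℕ) ≤ m :=
            Finset.le_sup' (fun b => ((e.symm b : Fin n) : ℕ)) hb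
          rw [Fin.le_def, hmmval]; omega
        calc g b = g (e (e.symm b)) := by rw [Equiv.apply_symm_apply]
          _ ≤ g (e mm) := hg h4
    rw [hval]; ring
  · intro i _ hne
    have hnem : (i : ℕ) ≠ m := fun h => hne (Fin.ext h)
    rcases lt_or_gt_of_ne hnem with h | h
    · rw [if_neg (by rw [hsub]; omega), if_neg (by rw [hsub]; omega)]; ring
    · rw [if_pos ((hsub _).mpr (by omega)), if_pos ((hsub _).mpr (by omega))]; ring
  · intro h; exact absurd (Finset.mem_univ mm) h

/-- Möbius decomposition of the Choquet integral as a min-expectation. -/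
lemma choquet_mobius_inf {X : Type*} [Fintype X] [DecidableEq X] {n : ℕ}
    (μ : Finset X → ℝ) (e : Fin n ≃ X) (g : X → ℝ) (hg : Monotone fun i => g (e i)) :
    choquetSum μ g e =
      ∑ B ∈ (Finset.univ : Finset X).powerset,
        if hB : B.Nonempty then mobius μ B * B.inf' hB g else 0 := by
  unfold choquetSum
  calc ∑ i : Fin n, g (e i) * (μ (upSet e i) - μ (upSet e ((i : ℕ) + 1)))
      = ∑ i : Fin n, ∑ B ∈ (Finset.univ : Finset X).powerset,
          g (e i) * ((if B ⊆ upSet e (i : ℕ) then mobius μ B else 0) -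
            (if B ⊆ upSet e ((i : ℕ) + 1) then mobius μ B else 0)) := by
        refine Finset.sum_congr rfl fun i _ => ?_
        rw [measure_expand μ (upSet e i), measure_expand μ (upSet e ((i : ℕ) + 1)),
          ← Finset.sum_sub_distrib, Finset.mul_sum]
    _ = ∑ B ∈ (Finset.univ : Finset X).powerset, ∑ i : Fin n,
          g (e i) * ((if B ⊆ upSet e (i : ℕ) then mobius μ B else 0) -
            (if B ⊆ upSet e ((i : ℕ) + 1) then mobius μ B else 0)) := Finset.sum_comm
    _ = _ := by
        refine Finset.sum_congr rfl fun B _ => ?_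
        by_cases hB : B.Nonempty
        · rw [dif_pos hB, ← key_min e g hg (mobius μ B) B hB]
        · rw [dif_neg hB]
          rw [Finset.not_nonempty_iff_eq_empty] at hB
          subst hB
          simp

/-- Möbius decomposition of the dual Choquet integral as a max-expectation. -/
lemma choquet_mobius_sup {X : Type*} [Fintype X] [DecidableEq X] {n : ℕ}
    (μ : Finset X → ℝ) (e : Fin n ≃ X) (g : X → ℝ) (hg : Monotone fun i => g (e i)) :
    choquetSum (dualMeasure μ) g e =
      ∑ B ∈ (Finset.univ : Finset X).powerset,
        if hB : B.Nonempty then mobius μ B * B.sup' hB g else 0 := by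
  unfold choquetSum dualMeasure
  calc ∑ i : Fin n, g (e i) *
        ((μ Finset.univ - μ (Finset.univ \ upSet e (i : ℕ))) -
          (μ Finset.univ - μ (Finset.univ \ upSet e ((i : ℕ) + 1))))
      = ∑ i : Fin n, ∑ B ∈ (Finset.univ : Finset X).powerset,
          g (e i) * ((if B ⊆ Finset.univ \ upSet e ((i : ℕ) + 1) then mobius μ B else 0) -
            (if B ⊆ Finset.univ \ upSet e (i : ℕ) then mobius μ B else 0)) := by
        refine Finset.sum_congr rfl fun i _ => ?_
        rw [measure_expand μ (Finset.univ \ upSet e (i : ℕ)),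
          measure_expand μ (Finset.univ \ upSet e ((i : ℕ) + 1)),
          ← Finset.mul_sum, Finset.sum_sub_distrib]
        ring
    _ = ∑ B ∈ (Finset.univ : Finset X).powerset, ∑ i : Fin n,
          g (e i) * ((if B ⊆ Finset.univ \ upSet e ((i : ℕ) + 1) then mobius μ B else 0) -
            (if B ⊆ Finset.univ \ upSet e (i : ℕ) then mobius μ B else 0)) := Finset.sum_comm
    _ = _ := by
        refine Finset.sum_congr rfl fun B _ => ?_
        by_cases hB : B.Nonempty
        · rw [dif_pos hB, ← key_max e g hg (mobius μ B) B hB]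
        · rw [dif_neg hB]
          rw [Finset.not_nonempty_iff_eq_empty] at hB
          subst hB
          simp

/-- For `μ_α := (1−α)μ + αμ̄` monotone (`α ∈ [0,1]`), the α-Choquet
distance admits the Möbius decomposition
`∫ |a(x) − a(y)| dμ_α(a) = ∑_{∅ ≠ B ⊆ 𝒜} M_μ(B) · [(1−α)·min_{a ∈ B}|a(x) − a(y)| +
α·max_{a ∈ B}|a(x) − a(y)|]`. -/
theorem alpha_choquet_distance_mobius_decomposition
    {I A : Type*} [Fintype A] [DecidableEq A] {n : ℕ} (hn : 0 < n)
    (val : A → I → ℝ)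
    (μ : Finset A → ℝ) (hμ_empty : μ ∅ = 0)
    (hμ_mono : ∀ S T : Finset A, S ⊆ T → μ S ≤ μ T)
    (α : ℝ) (hα : α ∈ Set.Icc (0 : ℝ) 1)
    (hα_mono : ∀ S T : Finset A, S ⊆ T →
      (1 - α) * μ S + α * dualMeasure μ S ≤ (1 - α) * μ T + α * dualMeasure μ T)
    (x y : I)
    (e : Fin n ≃ A) (hsort : Monotone (fun i => |val (e i) x - val (e i) y|)) :
    choquetSum (fun S => (1 - α) * μ S + α * dualMeasure μ S)
        (fun a => |val a x - val a y|) e =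
      ∑ B ∈ (Finset.univ : Finset A).powerset,
        if hB : B.Nonempty then
          mobius μ B *
            ((1 - α) * B.inf' hB (fun a => |val a x - val a y|) +
              α * B.sup' hB (fun a => |val a x - val a y|))
        else 0 := by
  set g : A → ℝ := fun a => |val a x - val a y| with hg
  have hgmono : Monotone fun i => g (e i) := hsort
  have hlin : choquetSum (fun S => (1 - α) * μ S + α * dualMeasure μ S) g e
      = (1 - α) * choquetSum μ g e + α * choquetSum (dualMeasure μ) g e := by
    unfold choquetSum
    rw [Finset.mul_sum, Finset.mul_sum, ← Finset.sum_add_distrib]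
    exact Finset.sum_congr rfl fun i _ => by ring
  rw [hlin, choquet_mobius_inf μ e g hgmono, choquet_mobius_sup μ e g hgmono,
    Finset.mul_sum, Finset.mul_sum, ← Finset.sum_add_distrib]
  refine Finset.sum_congr rfl fun B _ => ?_
  by_cases hB : B.Nonempty
  · rw [dif_pos hB, dif_pos hB, dif_pos hB]; ring
  · rw [dif_neg hB, dif_neg hB, dif_neg hB]; ring
end
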